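/- Let D ⊆ ℝ^n be Clarke regular at x̄ ∈ D, and let f : ℝ^n → ℝ be continuously differentiable at x̄ with ∇f(x̄) ≠ 0 and −∇f(x̄) ∈ N_D(x̄) (this last condition holds whenever x̄ is a local minimizer of min{ f(x) : x ∈ D }). Then the following two conditions are equivalent: (i) −∇f(x̄) ∈ int(N_D(x̄)); (ii) {∇f(x̄)}^⊥ ∩ T_D(x̄) = {0}, where {∇f(x̄)}^⊥ = { w : ∇f(x̄)^T w = 0 }. -/

import Mathlib

open Set Filter Topology Matrix Bornology Asymptotics Pointwise

noncomputable section

/-- The (Bouligand) tangent cone of `C` at `xbar`: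
`w` is tangent if `(xⱼ - xbar)/tⱼ → w` for some `xⱼ ∈ C`, `xⱼ → xbar`, `tⱼ ↓ 0`. -/
def tanCone {k : ℕ} (C : Set (Fin k → ℝ)) (xbar : Fin k → ℝ) : Set (Fin k → ℝ) :=
  {w | ∃ (xs : ℕ → Fin k → ℝ) (ts : ℕ → ℝ),
    (∀ j, xs j ∈ C) ∧ (∀ j, 0 < ts j) ∧
    Tendsto ts atTop (𝓝 0) ∧ Tendsto xs atTop (𝓝 xbar) ∧
    Tendsto (fun j => (ts j)⁻¹ • (xs j - xbar)) atTop (𝓝 w)}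

/-- Regular normals: `v ⬝ (x - xbar) ≤ o(‖x - xbar‖)` for `x ∈ C`. -/
def regNormal {k : ℕ} (C : Set (Fin k → ℝ)) (xbar : Fin k → ℝ) : Set (Fin k → ℝ) :=
  {v | ∀ ε > 0, ∃ δ > 0, ∀ x ∈ C, ‖x - xbar‖ < δ → v ⬝ᵥ (x - xbar) ≤ ε * ‖x - xbar‖}

/-- General normals: limits of regular normals at nearby points of `C`. -/
def genNormal {k : ℕ} (C : Set (Fin k → ℝ)) (xbar : Fin k → ℝ) : Set (Fin k → ℝ) :=
  {v | ∃ xs vs : ℕ → Fin k → ℝ, (∀ j, xs j ∈ C) ∧ (∀ j, vs j ∈ regNormal C (xs j)) ∧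
    Tendsto xs atTop (𝓝 xbar) ∧ Tendsto vs atTop (𝓝 v)}

/-- Clarke regularity: local closedness at `xbar` and all normals are regular. -/
def ClarkeRegularAt {k : ℕ} (C : Set (Fin k → ℝ)) (xbar : Fin k → ℝ) : Prop :=
  (∃ U ∈ 𝓝 xbar, IsClosed (C ∩ U)) ∧ genNormal C xbar = regNormal C xbar

/-- Regular (Fréchet) subgradients: `f x ≥ f xbar + v ⬝ (x - xbar) + o(‖x - xbar‖)`. -/
def regSubgrad {k : ℕ} (f : (Fin k → ℝ) → ℝ) (xbar : Fin k → ℝ) : Set (Fin k → ℝ) :=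
  {v | ∀ ε > 0, ∃ δ > 0, ∀ x, ‖x - xbar‖ < δ → f xbar + v ⬝ᵥ (x - xbar) - ε * ‖x - xbar‖ ≤ f x}

/-- General subgradients: limits of regular subgradients along `xⱼ → xbar`, `f xⱼ → f xbar`. -/
def genSubgrad {k : ℕ} (f : (Fin k → ℝ) → ℝ) (xbar : Fin k → ℝ) : Set (Fin k → ℝ) :=
  {v | ∃ xs vs : ℕ → Fin k → ℝ, Tendsto xs atTop (𝓝 xbar) ∧
    Tendsto (fun j => f (xs j)) atTop (𝓝 (f xbar)) ∧
    (∀ j, vs j ∈ regSubgrad f (xs j)) ∧ Tendsto vs atTop (𝓝 v)}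

/-- Subdifferential regularity: the general and regular subdifferentials agree. -/
def SubdiffRegularAt {k : ℕ} (f : (Fin k → ℝ) → ℝ) (xbar : Fin k → ℝ) : Prop :=
  genSubgrad f xbar = regSubgrad f xbar

/-- `f` is locally Lipschitz at `xbar`. -/
def LocLipschitzAt {k : ℕ} (f : (Fin k → ℝ) → ℝ) (xbar : Fin k → ℝ) : Prop :=
  ∃ K : NNReal, ∃ s ∈ 𝓝 xbar, LipschitzOnWith K f s

/-- The subderivative `df(xbar)(w) = liminf_{τ↓0} (f(xbar+τw) - f(xbar))/τ`. -/
def subderiv {k : ℕ} (f : (Fin k → ℝ) → ℝ) (xbar w : Fin k → ℝ) : ℝ :=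
  Filter.liminf (fun τ : ℝ => (f (xbar + τ • w) - f xbar) / τ) (𝓝[>] (0:ℝ))


section AuxLemmas

variable {k : ℕ} {C : Set (Fin k → ℝ)} {xb : Fin k → ℝ}

lemma aux_dot_continuous (v : Fin k → ℝ) : Continuous fun w : Fin k → ℝ => v ⬝ᵥ w :=
  continuous_finset_sum _ fun i _ => continuous_const.mul (continuous_apply i)

lemma aux_dot_le (u w : Fin k → ℝ) : u ⬝ᵥ w ≤ (k : ℝ) * ‖u‖ * ‖w‖ := by
  have h : u ⬝ᵥ w = ∑ i, u i * w i := rfl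
  rw [h]
  calc ∑ i, u i * w i ≤ ∑ i, |u i * w i| := Finset.sum_le_sum fun i _ => le_abs_self _
    _ ≤ ∑ _i : Fin k, ‖u‖ * ‖w‖ := by
        refine Finset.sum_le_sum fun i _ => ?_
        rw [abs_mul]
        have h1 : |u i| ≤ ‖u‖ := by simpa [Real.norm_eq_abs] using norm_le_pi_norm u i
        have h2 : |w i| ≤ ‖w‖ := by simpa [Real.norm_eq_abs] using norm_le_pi_norm w i
        exact mul_le_mul h1 h2 (abs_nonneg _) (norm_nonneg _)
    _ = (k : ℝ) * ‖u‖ * ‖w‖ := by simp [Finset.sum_const, mul_assoc]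

lemma aux_zero_mem (hxb : xb ∈ C) : (0 : Fin k → ℝ) ∈ tanCone C xb := by
  refine ⟨fun _ => xb, fun j => 1 / (j + 1), fun _ => hxb, fun j => by positivity,
    tendsto_one_div_add_atTop_nhds_zero_nat, tendsto_const_nhds, ?_⟩
  simpa using (tendsto_const_nhds : Tendsto (fun _ : ℕ => (0 : Fin k → ℝ)) atTop _)

lemma aux_cone {c : ℝ} (hc : 0 < c) {w : Fin k → ℝ} (hw : w ∈ tanCone C xb) :
    c • w ∈ tanCone C xb := by
  obtain ⟨xs, ts, hmem, hpos, hts, hxs, hlim⟩ := hw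
  refine ⟨xs, fun j => c⁻¹ * ts j, hmem, fun j => by have := hpos j; positivity, ?_, hxs, ?_⟩
  · simpa using hts.const_mul c⁻¹
  · have heq : (fun j => (c⁻¹ * ts j)⁻¹ • (xs j - xb))
        = fun j => c • ((ts j)⁻¹ • (xs j - xb)) := by
      funext j
      rw [_root_.mul_inv_rev, inv_inv, mul_comm, mul_smul]
    rw [heq]
    exact hlim.const_smul c

lemma aux_approx {w : Fin k → ℝ} (hw : w ∈ tanCone C xb) {ε : ℝ} (hε : 0 < ε) :
    ∃ x ∈ C, ∃ t : ℝ, 0 < t ∧ t < ε ∧ ‖x - xb‖ < ε ∧ ‖t⁻¹ • (x - xb) - w‖ < ε := by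
  obtain ⟨xs, ts, hmem, hpos, hts, hxs, hlim⟩ := hw
  obtain ⟨N1, h1⟩ := Metric.tendsto_atTop.mp hts ε hε
  obtain ⟨N2, h2⟩ := Metric.tendsto_atTop.mp hxs ε hε
  obtain ⟨N3, h3⟩ := Metric.tendsto_atTop.mp hlim ε hε
  set j := max N1 (max N2 N3) with hj
  refine ⟨xs j, hmem j, ts j, hpos j, ?_, ?_, ?_⟩
  · have := h1 j (le_max_left _ _)
    rw [Real.dist_eq, sub_zero] at this
    exact lt_of_abs_lt this
  · have := h2 j (le_max_of_le_right (le_max_left _ _))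
    rwa [dist_eq_norm] at this
  · have := h3 j (le_max_of_le_right (le_max_right _ _))
    rwa [dist_eq_norm] at this

lemma aux_seq_closed {ws : ℕ → Fin k → ℝ} {w : Fin k → ℝ} (hws : ∀ j, ws j ∈ tanCone C xb)
    (hlim : Tendsto ws atTop (𝓝 w)) : w ∈ tanCone C xb := by
  have hchoice : ∀ j : ℕ, ∃ x ∈ C, ∃ t : ℝ, 0 < t ∧ t < 1 / (j + 1) ∧
      ‖x - xb‖ < 1 / (j + 1) ∧ ‖t⁻¹ • (x - xb) - ws j‖ < 1 / (j + 1) :=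
    fun j => aux_approx (hws j) (by positivity)
  choose x hxC t ht0 htlt hxlt hqlt using hchoice
  have hbase : Tendsto (fun j : ℕ => 1 / ((j : ℝ) + 1)) atTop (𝓝 0) :=
    tendsto_one_div_add_atTop_nhds_zero_nat
  refine ⟨x, t, hxC, ht0, ?_, ?_, ?_⟩
  · exact squeeze_zero (fun j => (ht0 j).le) (fun j => (htlt j).le) hbase
  · rw [← tendsto_sub_nhds_zero_iff]
    exact squeeze_zero_norm (fun j => (hxlt j).le) hbase
  · rw [← tendsto_sub_nhds_zero_iff]
    have hb : ∀ j, ‖(t j)⁻¹ • (x j - xb) - w‖ ≤ 1 / (j + 1) + ‖ws j - w‖ := by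
      intro j
      have : (t j)⁻¹ • (x j - xb) - w
          = ((t j)⁻¹ • (x j - xb) - ws j) + (ws j - w) := by abel
      rw [this]
      exact (norm_add_le _ _).trans (add_le_add (hqlt j).le le_rfl)
    refine squeeze_zero_norm hb ?_
    have hlim2 : Tendsto (fun j => ‖ws j - w‖) atTop (𝓝 0) := by
      have := tendsto_sub_nhds_zero_iff.mpr hlim
      simpa using this.norm
    simpa using hbase.add hlim2

lemma aux_tan_closed : IsClosed (tanCone C xb) :=
  IsSeqClosed.isClosed fun _ _ hws hlim => aux_seq_closed hws hlim

lemma aux_polar_le {v w : Fin k → ℝ} (hv : v ∈ regNormal C xb) (hw : w ∈ tanCone C xb) :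
    v ⬝ᵥ w ≤ 0 := by
  have key : ∀ ε > 0, v ⬝ᵥ w ≤ ε * ‖w‖ := by
    intro ε hε
    obtain ⟨xs, ts, hmem, hpos, hts, hxs, hlim⟩ := hw
    obtain ⟨δ, hδ, hδ'⟩ := hv ε hε
    have hev : ∀ᶠ j in atTop,
        v ⬝ᵥ ((ts j)⁻¹ • (xs j - xb)) ≤ ε * ‖(ts j)⁻¹ • (xs j - xb)‖ := by
      have hn : Tendsto (fun j => ‖xs j - xb‖) atTop (𝓝 0) := by
        have := tendsto_sub_nhds_zero_iff.mpr hxs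
        simpa using this.norm
      have hev0 : ∀ᶠ j in atTop, ‖xs j - xb‖ < δ := hn.eventually_lt_const hδ
      filter_upwards [hev0] with j hj
      have h1 := hδ' (xs j) (hmem j) hj
      have h2 : (0 : ℝ) ≤ (ts j)⁻¹ := (inv_pos.mpr (hpos j)).le
      rw [dotProduct_smul, smul_eq_mul, norm_smul, Real.norm_eq_abs, abs_of_nonneg h2]
      calc (ts j)⁻¹ * (v ⬝ᵥ (xs j - xb)) ≤ (ts j)⁻¹ * (ε * ‖xs j - xb‖) :=
            mul_le_mul_of_nonneg_left h1 h2
        _ = ε * ((ts j)⁻¹ * ‖xs j - xb‖) := by ring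
    have l1 : Tendsto (fun j => v ⬝ᵥ ((ts j)⁻¹ • (xs j - xb))) atTop (𝓝 (v ⬝ᵥ w)) :=
      ((aux_dot_continuous v).tendsto w).comp hlim
    have l2 : Tendsto (fun j => ε * ‖(ts j)⁻¹ • (xs j - xb)‖) atTop (𝓝 (ε * ‖w‖)) :=
      hlim.norm.const_mul ε
    exact le_of_tendsto_of_tendsto l1 l2 hev
  rcases eq_or_ne w 0 with rfl | hw0
  · simp
  · refine le_of_forall_pos_le_add fun δ hδ => ?_
    have hnw : 0 < ‖w‖ := norm_pos_iff.mpr hw0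
    have h := key (δ / ‖w‖) (by positivity)
    rw [div_mul_cancel₀ _ hnw.ne'] at h
    linarith

lemma aux_polar_mem {v : Fin k → ℝ} (h : ∀ w ∈ tanCone C xb, v ⬝ᵥ w ≤ 0) :
    v ∈ regNormal C xb := by
  by_contra hv
  simp only [regNormal, Set.mem_setOf_eq] at hv
  push_neg at hv
  obtain ⟨ε, hε, hδ⟩ := hv
  have hchoice : ∀ j : ℕ, ∃ x ∈ C, ‖x - xb‖ < 1 / (j + 1) ∧
      ε * ‖x - xb‖ < v ⬝ᵥ (x - xb) := by
    intro j
    obtain ⟨x, hxC, hlt, hgt⟩ := hδ (1 / (j + 1)) (by positivity)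
    exact ⟨x, hxC, hlt, hgt⟩
  choose x hxC hxlt hxgt using hchoice
  have hxne : ∀ j, x j ≠ xb := by
    intro j hj
    have := hxgt j
    rw [hj] at this
    simp at this
  set t : ℕ → ℝ := fun j => ‖x j - xb‖ with ht
  have ht0 : ∀ j, 0 < t j := fun j => norm_pos_iff.mpr (sub_ne_zero.mpr (hxne j))
  set ws : ℕ → Fin k → ℝ := fun j => (t j)⁻¹ • (x j - xb) with hws
  have hsph : ∀ j, ws j ∈ Metric.sphere (0 : Fin k → ℝ) 1 := by
    intro j
    simp only [Metric.mem_sphere, dist_zero_right, hws, norm_smul, Real.norm_eq_abs,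
      abs_of_pos (inv_pos.mpr (ht0 j))]
    exact inv_mul_cancel₀ (ht0 j).ne'
  obtain ⟨w, _hwsph, φ, hφ, hwlim⟩ :=
    (isCompact_sphere (0 : Fin k → ℝ) 1).tendsto_subseq hsph
  have hbase : Tendsto (fun j : ℕ => 1 / ((j : ℝ) + 1)) atTop (𝓝 0) :=
    tendsto_one_div_add_atTop_nhds_zero_nat
  have hineq : ∀ j, t (φ j) ≤ 1 / ((j : ℝ) + 1) := by
    intro j
    refine (hxlt (φ j)).le.trans ?_
    have : (j : ℝ) + 1 ≤ (φ j : ℝ) + 1 := by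
      have := hφ.le_apply (x := j)
      exact_mod_cast add_le_add_left (Nat.cast_le.mpr this) 1
    exact one_div_le_one_div_of_le (by positivity) this
  have hwT : w ∈ tanCone C xb := by
    refine ⟨fun j => x (φ j), fun j => t (φ j), fun j => hxC _, fun j => ht0 _,
      squeeze_zero (fun j => (ht0 _).le) hineq hbase, ?_, hwlim⟩
    rw [← tendsto_sub_nhds_zero_iff]
    exact squeeze_zero_norm (fun j => hineq j) hbase
  have hterm : ∀ j, ε ≤ v ⬝ᵥ (ws (φ j)) := by
    intro j
    have key : ε * t (φ j) < v ⬝ᵥ (x (φ j) - xb) := hxgt (φ j)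
    have h2 : (0 : ℝ) < (t (φ j))⁻¹ := inv_pos.mpr (ht0 _)
    have := mul_le_mul_of_nonneg_left key.le h2.le
    rw [mul_comm ε, ← mul_assoc, inv_mul_cancel₀ (ht0 _).ne', one_mul] at this
    simpa only [hws, dotProduct_smul, smul_eq_mul] using this
  have hlimdot : Tendsto (fun j => v ⬝ᵥ (ws (φ j))) atTop (𝓝 (v ⬝ᵥ w)) :=
    ((aux_dot_continuous v).tendsto w).comp hwlim
  have hpos : ε ≤ v ⬝ᵥ w := ge_of_tendsto' hlimdot hterm
  have := h w hwT
  linarith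

lemma aux_reg_sub_gen (hxb : xb ∈ C) {v : Fin k → ℝ} (hv : v ∈ regNormal C xb) :
    v ∈ genNormal C xb :=
  ⟨fun _ => xb, fun _ => v, fun _ => hxb, fun _ => hv, tendsto_const_nhds, tendsto_const_nhds⟩

end AuxLemmas

/-- Equivalence of the strict minimizer condition
(Lemma `lem:equiv-strict`). -/
theorem equivalence_of_strict_minimizer_condition
    {n : ℕ} (D : Set (Fin n → ℝ)) (xbar : Fin n → ℝ) (hxbar : xbar ∈ D)
    (hreg : ClarkeRegularAt D xbar)
    (f : (Fin n → ℝ) → ℝ) (hC1 : ContDiffAt ℝ 1 f xbar)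
    -- `g` is the gradient of `f` at `xbar`
    (g : Fin n → ℝ) (hg : ∀ w, fderiv ℝ f xbar w = g ⬝ᵥ w)
    (hg0 : g ≠ 0) (hgN : -g ∈ genNormal D xbar) :
    -g ∈ interior (genNormal D xbar) ↔
      {w : Fin n → ℝ | g ⬝ᵥ w = 0} ∩ tanCone D xbar = {0} := by
  rw [hreg.2] at hgN ⊢
  constructor
  · intro hint
    apply Set.eq_singleton_iff_unique_mem.mpr
    refine ⟨⟨by simp [Set.mem_setOf_eq], aux_zero_mem hxbar⟩, ?_⟩
    intro w hw
    obtain ⟨hw0, hwT⟩ := hw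
    by_contra hne
    rw [mem_interior_iff_mem_nhds, Metric.mem_nhds_iff] at hint
    obtain ⟨ε, hε, hball⟩ := hint
    have hnw : 0 < ‖w‖ := norm_pos_iff.mpr hne
    set c : ℝ := ε / (2 * ‖w‖) with hc
    have hcpos : 0 < c := by positivity
    set v : Fin n → ℝ := -g + c • w with hv
    have hvmem : v ∈ regNormal D xbar := by
      apply hball
      rw [Metric.mem_ball, dist_eq_norm]
      have : v - -g = c • w := by rw [hv]; abel
      rw [this, norm_smul, Real.norm_eq_abs, abs_of_pos hcpos]
      have hcalc : c * ‖w‖ = ε / 2 := by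
        rw [hc]; field_simp
      rw [hcalc]
      linarith
    have hle := aux_polar_le hvmem hwT
    have hww : 0 < w ⬝ᵥ w := by
      have h1 : (0 : ℝ) ≤ w ⬝ᵥ w := Finset.sum_nonneg fun i _ => mul_self_nonneg _
      have h2 : w ⬝ᵥ w ≠ 0 := fun h => hne (dotProduct_self_eq_zero.mp h)
      exact h1.lt_of_ne' h2
    have hcomp : v ⬝ᵥ w = c * (w ⬝ᵥ w) := by
      rw [hv, add_dotProduct, neg_dotProduct, smul_dotProduct, smul_eq_mul, hw0]
      ring
    nlinarith
  · intro hT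
    rw [mem_interior_iff_mem_nhds, Metric.mem_nhds_iff]
    have hTpos : ∀ w ∈ tanCone D xbar, w ≠ 0 → 0 < g ⬝ᵥ w := by
      intro w hwT hw0
      have h1 : -g ⬝ᵥ w ≤ 0 := aux_polar_le hgN hwT
      rw [neg_dotProduct, neg_nonpos] at h1
      rcases h1.lt_or_eq with h | h
      · exact h
      · exfalso
        have hmem : w ∈ {w : Fin n → ℝ | g ⬝ᵥ w = 0} ∩ tanCone D xbar := ⟨h.symm, hwT⟩
        rw [hT] at hmem
        exact hw0 hmem
    set S := tanCone D xbar ∩ Metric.sphere (0 : Fin n → ℝ) 1 with hS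
    have hScomp : IsCompact S := (isCompact_sphere _ _).inter_left aux_tan_closed
    obtain ⟨ε, hε, hεS⟩ : ∃ ε > 0, ∀ w ∈ S, ε ≤ g ⬝ᵥ w := by
      rcases S.eq_empty_or_nonempty with hSe | hSn
      · exact ⟨1, one_pos, by simp [hSe]⟩
      · obtain ⟨w0, hw0S, hmin⟩ := hScomp.exists_isMinOn hSn (aux_dot_continuous g).continuousOn
        refine ⟨g ⬝ᵥ w0, hTpos w0 hw0S.1 ?_, fun w hw => hmin hw⟩
        intro h0
        have := hw0S.2
        rw [h0] at this
        simp at this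
    refine ⟨ε / (n + 1), by positivity, ?_⟩
    intro v hv
    rw [Metric.mem_ball, dist_eq_norm, sub_neg_eq_add] at hv
    apply aux_polar_mem
    intro w hwT
    rcases eq_or_ne w 0 with rfl | hw0
    · simp
    · have hnw : 0 < ‖w‖ := norm_pos_iff.mpr hw0
      set u : Fin n → ℝ := ‖w‖⁻¹ • w with hu
      have huT : u ∈ tanCone D xbar := aux_cone (inv_pos.mpr hnw) hwT
      have hunorm : ‖u‖ = 1 := by
        rw [hu, norm_smul, Real.norm_eq_abs, abs_of_pos (inv_pos.mpr hnw)]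
        exact inv_mul_cancel₀ hnw.ne'
      have husph : u ∈ Metric.sphere (0 : Fin n → ℝ) 1 := by
        simp [Metric.mem_sphere, dist_zero_right, hunorm]
      have h1 : ε ≤ g ⬝ᵥ u := hεS u ⟨huT, husph⟩
      have h2 : (v + g) ⬝ᵥ u ≤ (n : ℝ) * ‖v + g‖ * 1 := by
        have := aux_dot_le (v + g) u
        rwa [hunorm] at this
      have hvg' : ‖v + g‖ * ((n : ℝ) + 1) < ε := by
        rw [← lt_div_iff₀ (by positivity : (0:ℝ) < (n : ℝ) + 1)]
        exact hv
      have hvgnn : (0 : ℝ) ≤ ‖v + g‖ := norm_nonneg _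
      have hncast : (0 : ℝ) ≤ (n : ℝ) := Nat.cast_nonneg n
      have hdec : v ⬝ᵥ u = -(g ⬝ᵥ u) + (v + g) ⬝ᵥ u := by
        rw [add_dotProduct]
        ring
      have hvu : v ⬝ᵥ u ≤ 0 := by nlinarith
      have hfin : v ⬝ᵥ w = ‖w‖ * (v ⬝ᵥ u) := by
        rw [hu, dotProduct_smul, smul_eq_mul, ← mul_assoc, mul_inv_cancel₀ hnw.ne', one_mul]
      rw [hfin]
      exact mul_nonpos_of_nonneg_of_nonpos hnw.le hvu
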